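/- Let β > 1, C ≥ 1 and λ ≥ 1 be real numbers, set M = C^{1/(β-1)}·λ^{β/(β-1)²}, and let (E_k)_{k≥0} be a sequence of nonnegative real numbers satisfying E_{k+1} ≤ C·λ^{k+1}·E_k^β for every k ≥ 0. If M·E_0 < 1, then E_k tends to 0 as k → ∞. -/
import Mathlib

lemma deGiorgi_aux (β C l : ℝ) (hβ : 1 < β) (hC0 : 0 < C) (hl0 : 0 < l) (k : ℕ) :
    C * l ^ (k + 1) * (C ^ (1/(β-1)) * l ^ (β/(β-1)^2) * l ^ (((k:ℝ)+1)/(β-1)))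
      = (C ^ (1/(β-1)) * l ^ (β/(β-1)^2) * l ^ ((k : ℝ)/(β-1))) ^ β := by
  have hδ : 0 < β - 1 := by linarith
  refine Real.log_injOn_pos (Set.mem_Ioi.2 (by positivity)) (Set.mem_Ioi.2 (by positivity)) ?_
  rw [Real.log_rpow (by positivity),
    Real.log_mul (by positivity) (by positivity),
    Real.log_mul (by positivity) (by positivity),
    Real.log_mul (by positivity) (by positivity),
    Real.log_mul (by positivity) (by positivity),
    Real.log_mul (by positivity) (by positivity),
    Real.log_pow, Real.log_rpow hC0, Real.log_rpow hl0]
  rw [Real.log_mul (by positivity) (by positivity), Real.log_rpow hl0, Real.log_rpow hC0]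
  rw [Real.log_rpow hl0, Real.log_rpow hl0]
  push_cast
  field_simp
  ring

/-- Let `β > 1`, `C ≥ 1`, `λ ≥ 1`, set `M = C^{1/(β-1)}·λ^{β/(β-1)²}`, and let `(E_k)` be a
nonnegative sequence with `E_{k+1} ≤ C·λ^{k+1}·E_k^β`. If `M·E_0 < 1` then `E_k → 0`. -/
theorem deGiorgi_iteration_tendsto_zero (β C l : ℝ) (hβ : 1 < β) (hC : 1 ≤ C) (hl : 1 ≤ l)
    (E : ℕ → ℝ) (hE : ∀ k, 0 ≤ E k)
    (hrec : ∀ k, E (k + 1) ≤ C * l ^ (k + 1) * E k ^ β)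
    (hsmall : C ^ (1 / (β - 1)) * l ^ (β / (β - 1) ^ 2) * E 0 < 1) :
    Filter.Tendsto E Filter.atTop (nhds 0) := by
  have hδ : 0 < β - 1 := by linarith
  have hC0 : (0:ℝ) < C := lt_of_lt_of_le one_pos hC
  have hl0 : (0:ℝ) < l := lt_of_lt_of_le one_pos hl
  set m : ℝ := C ^ (1 / (β - 1)) * l ^ (β / (β - 1) ^ 2) with hm
  have hm0 : 0 < m := mul_pos (Real.rpow_pos_of_pos hC0 _) (Real.rpow_pos_of_pos hl0 _)
  set θ : ℝ := m * E 0 with hθdef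
  have hθ0 : 0 ≤ θ := mul_nonneg hm0.le (hE 0)
  have hθ1 : θ < 1 := hsmall
  -- the key inductive bound
  have hbound : ∀ k : ℕ, E k ≤ θ ^ (β ^ k) / (m * l ^ ((k : ℝ) / (β - 1))) := by
    intro k
    induction k with
    | zero =>
      have h0 : θ ^ (β ^ 0) / (m * l ^ (((0 : ℕ) : ℝ) / (β - 1))) = E 0 := by
        rw [pow_zero, Real.rpow_one, Nat.cast_zero, zero_div, Real.rpow_zero, mul_one, hθdef]
        field_simp
      exact le_of_eq h0.symm
    | succ k ih =>
      have hden0 : 0 < m * l ^ ((k : ℝ) / (β - 1)) :=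
        mul_pos hm0 (Real.rpow_pos_of_pos hl0 _)
      have h1 : E (k + 1) ≤ C * l ^ (k + 1) * (θ ^ (β ^ k) / (m * l ^ ((k : ℝ) / (β - 1)))) ^ β := by
        refine le_trans (hrec k) ?_
        exact mul_le_mul_of_nonneg_left
          (Real.rpow_le_rpow (hE k) ih (by linarith)) (by positivity)
      refine h1.trans (le_of_eq ?_)
      have hkey : C * l ^ (k + 1) * (m * l ^ ((((k : ℕ) + 1 : ℕ) : ℝ) / (β - 1)))
          = (m * l ^ ((k : ℝ) / (β - 1))) ^ β := by
        rw [hm]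
        push_cast
        exact deGiorgi_aux β C l hβ hC0 hl0 k
      have hnum : 0 ≤ θ ^ (β ^ k) := Real.rpow_nonneg hθ0 _
      have hnum' : (θ ^ (β ^ k)) ^ β = θ ^ (β ^ (k + 1)) := by
        rw [← Real.rpow_mul hθ0, ← pow_succ]
      push_cast at hkey ⊢
      rw [Real.div_rpow hnum hden0.le, hnum']
      field_simp
      linear_combination (θ ^ (β ^ (k + 1))) * hkey
  -- conclusion by squeezing
  have htend : Filter.Tendsto (fun k : ℕ => θ ^ (β ^ k) / m) Filter.atTop (nhds 0) := by
    have h1 : Filter.Tendsto (fun k : ℕ => (β : ℝ) ^ k) Filter.atTop Filter.atTop :=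
      tendsto_pow_atTop_atTop_of_one_lt hβ
    have h2 := (tendsto_rpow_atTop_of_base_lt_one θ (by linarith) hθ1).comp h1
    simpa [Function.comp] using h2.div_const m
  refine squeeze_zero hE (fun k => ?_) htend
  exact (hbound k).trans (div_le_div_of_nonneg_left (Real.rpow_nonneg hθ0 _) hm0
    (le_mul_of_one_le_right hm0.le (Real.one_le_rpow hl (by positivity))))
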